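/- Let α and β be real numbers. In the ring of formal power series in u over ℝ, one has Σ_{n=0}^{∞} C(α+nβ, n) u^n = x^{α+1} / ((1-β)x + β), where x = x(u) is the unique formal power series with constant term 1 satisfying (x-1)/x^β = u; equivalently, the substitution u = (x-1)/x^β into the left side yields x^{α+1}/((1-β)x+β) as formal power series in x-1. -/

import Mathlib

open Finset PowerSeries

/-- Generalized binomial coefficient `C(x, k) = x(x-1)⋯(x-k+1)/k!` for real `x`. -/
noncomputable def gchoose (x : ℝ) (k : ℕ) : ℝ :=
  (∏ i ∈ Finset.range k, (x - i)) / (Nat.factorial k)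

/-- The binomial series `(1+t)^x = Σ C(x,k) t^k` as a formal power series. -/
noncomputable def binomSeries (x : ℝ) : PowerSeries ℝ :=
  PowerSeries.mk fun k => gchoose x k

lemma gchoose_zero (x : ℝ) : gchoose x 0 = 1 := by simp [gchoose]

lemma prod_sub_shift (a : ℝ) (k : ℕ) :
    ∏ i ∈ range (k+1), (a - i) = a * ∏ i ∈ range k, (a - 1 - i) := by
  rw [Finset.prod_range_succ', mul_comm]
  congr 1
  · push_cast; ring
  · apply Finset.prod_congr rfl; intro i _; push_cast; ring

lemma gchoose_pascal (x : ℝ) (k : ℕ) :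
    gchoose (x + 1) (k + 1) = gchoose x (k + 1) + gchoose x k := by
  unfold gchoose
  rw [prod_sub_shift, Finset.prod_range_succ, Nat.factorial_succ]
  have h1 : ∀ i ∈ range k, (x + 1 - 1 - (i:ℝ)) = x - i := by intro i _; ring
  rw [Finset.prod_congr rfl h1]
  have hk : (Nat.factorial k : ℝ) ≠ 0 := by exact_mod_cast Nat.factorial_ne_zero k
  have hk1 : ((k:ℝ)+1) ≠ 0 := by positivity
  push_cast
  field_simp
  ring

/-- Rothe weights `W_k(x) = x/(x+kz) · C(x+kz, k)`. -/
noncomputable def wchoose (z x : ℝ) : ℕ → ℝ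
  | 0 => 1
  | (k+1) => x * (∏ i ∈ Finset.range k, (x + (k+1)*z - 1 - i)) / (Nat.factorial (k+1))

lemma wchoose_zero (z x : ℝ) : wchoose z x 0 = 1 := rfl

lemma wchoose_zero_left (z : ℝ) (k : ℕ) : wchoose z 0 (k+1) = 0 := by
  simp [wchoose]

lemma wchoose_pascal (z x : ℝ) (k : ℕ) :
    wchoose z (x + 1) (k + 1) - wchoose z x (k + 1) = wchoose z (x + z) k := by
  cases k with
  | zero => simp [wchoose]
  | succ j =>
    simp only [wchoose]
    push_cast
    have e1 : ∀ i ∈ range (j+1), x + 1 + ((j:ℝ)+1+1)*z - 1 - i = (x + ((j:ℝ)+1+1)*z) - i := by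
      intro i _; ring
    rw [Finset.prod_congr rfl e1, prod_sub_shift, Finset.prod_range_succ]
    have e2 : ∀ i ∈ range j, x + ((j:ℝ)+1+1)*z - 1 - i = x + z + ((j:ℝ)+1)*z - 1 - i := by
      intro i _; ring
    rw [Finset.prod_congr rfl e2]
    have hj : (Nat.factorial (j+1) : ℝ) ≠ 0 := by exact_mod_cast Nat.factorial_ne_zero (j+1)
    have : (Nat.factorial (j+1+1) : ℝ) = ((j:ℝ)+1+1) * (Nat.factorial (j+1)) := by
      rw [Nat.factorial_succ]; push_cast; ring
    rw [this]
    have hj2 : ((j:ℝ)+1+1) ≠ 0 := by positivity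
    field_simp
    ring

lemma wchoose_split (z x : ℝ) (k : ℕ) :
    gchoose (x + (k+1)*z) (k+1) = wchoose z x (k+1) + z * gchoose (x + (k+1)*z - 1) k := by
  show (∏ i ∈ range (k+1), ((x + ((k:ℝ)+1)*z) - i)) / (Nat.factorial (k+1))
    = x * (∏ i ∈ range k, (x + ((k:ℝ)+1)*z - 1 - i)) / (Nat.factorial (k+1))
    + z * ((∏ i ∈ range k, ((x + ((k:ℝ)+1)*z - 1) - i)) / (Nat.factorial k))
  rw [prod_sub_shift]
  have : (Nat.factorial (k+1) : ℝ) = ((k:ℝ)+1) * (Nat.factorial k) := by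
    rw [Nat.factorial_succ]; push_cast; ring
  rw [this]
  have hk : (Nat.factorial k : ℝ) ≠ 0 := by exact_mod_cast Nat.factorial_ne_zero k
  have hk1 : ((k:ℝ)+1) ≠ 0 := by positivity
  field_simp

lemma periodic_eval (p : Polynomial ℝ) (h : ∀ x : ℝ, p.eval (x+1) = p.eval x) (x : ℝ) :
    p.eval x = p.eval 0 := by
  have hn : ∀ n : ℕ, p.eval (n : ℝ) = p.eval 0 := by
    intro n
    induction n with
    | zero => simp
    | succ k ih => push_cast; rw [h]; exact ih
  have hq : (p - Polynomial.C (p.eval 0)) = 0 := by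
    apply Polynomial.eq_zero_of_infinite_isRoot
    apply Set.Infinite.mono (s := Set.range ((↑·) : ℕ → ℝ))
    · rintro _ ⟨n, rfl⟩
      simp [Polynomial.IsRoot, hn n]
    · exact Set.infinite_range_of_injective Nat.cast_injective
  have h2 := congrArg (Polynomial.eval x) hq
  simpa [sub_eq_zero] using h2

noncomputable def gpoly (c : ℝ) (m : ℕ) : Polynomial ℝ :=
  (∏ i ∈ range m, (Polynomial.X + Polynomial.C (c - i))) * Polynomial.C ((Nat.factorial m : ℝ)⁻¹)

lemma gpoly_eval (c x : ℝ) (m : ℕ) : (gpoly c m).eval x = gchoose (x + c) m := by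
  simp only [gpoly, gchoose, Polynomial.eval_mul, Polynomial.eval_prod, Polynomial.eval_add,
    Polynomial.eval_X, Polynomial.eval_C, div_eq_mul_inv]
  congr 1
  apply Finset.prod_congr rfl
  intro i _; ring

noncomputable def wpoly (z : ℝ) : ℕ → Polynomial ℝ
  | 0 => 1
  | (k+1) => Polynomial.X * (∏ i ∈ Finset.range k, (Polynomial.X + Polynomial.C ((k+1)*z - 1 - i)))
      * Polynomial.C ((Nat.factorial (k+1) : ℝ)⁻¹)

lemma wpoly_eval (z x : ℝ) (k : ℕ) : (wpoly z k).eval x = wchoose z x k := by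
  cases k with
  | zero => simp [wpoly, wchoose]
  | succ j =>
    simp only [wpoly, wchoose, Polynomial.eval_mul, Polynomial.eval_prod, Polynomial.eval_add,
      Polynomial.eval_X, Polynomial.eval_C]
    have : ∀ i ∈ Finset.range j, (x + (((j:ℝ)+1)*z - 1 - (i:ℝ))) = x + ((j:ℝ)+1)*z - 1 - (i:ℝ) := by
      intro i _; ring
    rw [Finset.prod_congr rfl this, div_eq_mul_inv, mul_assoc]

/-- The Rothe sum. -/
noncomputable def rsum (z : ℝ) (m : ℕ) (x y : ℝ) : ℝ :=
  ∑ k ∈ Finset.range (m+1), wchoose z x k * gchoose (y + ((m-k : ℕ) : ℝ)*z) (m-k)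

lemma rsum_zero_left (z : ℝ) (m : ℕ) (y : ℝ) :
    rsum z m 0 y = gchoose (y + (m : ℝ)*z) m := by
  unfold rsum
  rw [Finset.sum_eq_single 0]
  · simp [wchoose_zero]
  · intro k _ hk
    obtain ⟨j, rfl⟩ := Nat.exists_eq_succ_of_ne_zero hk
    rw [wchoose_zero_left, zero_mul]
  · simp

lemma rsum_diff (z : ℝ) (m : ℕ) (x y : ℝ) :
    rsum z (m+1) (x+1) y - rsum z (m+1) x y = rsum z m (x+z) y := by
  unfold rsum
  rw [← Finset.sum_sub_distrib]
  have h1 : ∀ k ∈ Finset.range (m+2),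
      wchoose z (x+1) k * gchoose (y + ((m+1-k : ℕ) : ℝ)*z) (m+1-k)
        - wchoose z x k * gchoose (y + ((m+1-k : ℕ) : ℝ)*z) (m+1-k)
      = (wchoose z (x+1) k - wchoose z x k) * gchoose (y + ((m+1-k : ℕ) : ℝ)*z) (m+1-k) := by
    intro k _; ring
  rw [Finset.sum_congr rfl h1, Finset.sum_range_succ']
  simp only [wchoose_zero, sub_self, zero_mul, add_zero]
  apply Finset.sum_congr rfl
  intro k _
  rw [wchoose_pascal, Nat.succ_sub_succ]

theorem rothe (z : ℝ) : ∀ (m : ℕ) (x y : ℝ), rsum z m x y = gchoose (x + y + (m : ℝ)*z) m := by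
  intro m
  induction m with
  | zero => intro x y; simp [rsum, wchoose_zero, gchoose_zero]
  | succ m ih =>
    intro x y
    set p : Polynomial ℝ :=
      (∑ k ∈ Finset.range (m+2),
        Polynomial.C (gchoose (y + ((m+1-k : ℕ) : ℝ)*z) (m+1-k)) * wpoly z k)
      - gpoly (y + ((m+1 : ℕ) : ℝ)*z) (m+1) with hp
    have hpe : ∀ t : ℝ, p.eval t = rsum z (m+1) t y - gchoose (t + y + ((m+1 : ℕ) : ℝ)*z) (m+1) := by
      intro t
      simp only [hp, Polynomial.eval_sub, Polynomial.eval_finset_sum, Polynomial.eval_mul,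
        Polynomial.eval_C, wpoly_eval, gpoly_eval]
      congr 1
      · unfold rsum
        apply Finset.sum_congr rfl
        intro k _; ring
      · congr 1; ring
    have hper : ∀ t : ℝ, p.eval (t+1) = p.eval t := by
      intro t
      rw [hpe, hpe]
      have h1 : rsum z (m+1) (t+1) y - rsum z (m+1) t y = rsum z m (t+z) y := rsum_diff z m t y
      have h2 : gchoose (t+1 + y + ((m+1 : ℕ) : ℝ)*z) (m+1)
          = gchoose (t + y + ((m+1 : ℕ) : ℝ)*z) (m+1) + gchoose (t + y + ((m+1 : ℕ) : ℝ)*z) m := by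
        have hpas := gchoose_pascal (t + y + ((m+1 : ℕ) : ℝ)*z) m
        rw [← hpas]
        congr 1; push_cast; ring
      have h3 : rsum z m (t+z) y = gchoose (t + y + ((m+1 : ℕ) : ℝ)*z) m := by
        rw [ih (t+z) y]
        congr 1; push_cast; ring
      rw [h3] at h1
      linarith [h1, h2]
    have h0 : p.eval 0 = 0 := by
      rw [hpe, rsum_zero_left]
      simp
    have hx := periodic_eval p hper x
    rw [h0, hpe] at hx
    linarith [hx]

/-- The Gould convolution sum. -/
noncomputable def ssum (z : ℝ) (m : ℕ) (x y : ℝ) : ℝ :=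
  ∑ k ∈ Finset.range (m+1), gchoose (x + (k : ℝ)*z) k * gchoose (y + ((m-k : ℕ) : ℝ)*z) (m-k)

lemma ssum_rec (z : ℝ) (m : ℕ) (x y : ℝ) :
    ssum z (m+1) x y = gchoose (x + y + ((m+1 : ℕ) : ℝ)*z) (m+1) + z * ssum z m (x+z-1) y := by
  have key : ssum z (m+1) x y - rsum z (m+1) x y = z * ssum z m (x+z-1) y := by
    unfold ssum rsum
    rw [← Finset.sum_sub_distrib]
    have h1 : ∀ k ∈ Finset.range (m+2),
        gchoose (x + (k : ℝ)*z) k * gchoose (y + ((m+1-k : ℕ) : ℝ)*z) (m+1-k)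
          - wchoose z x k * gchoose (y + ((m+1-k : ℕ) : ℝ)*z) (m+1-k)
        = (gchoose (x + (k : ℝ)*z) k - wchoose z x k)
            * gchoose (y + ((m+1-k : ℕ) : ℝ)*z) (m+1-k) := by
      intro k _; ring
    rw [Finset.sum_congr rfl h1, Finset.sum_range_succ']
    rw [Finset.mul_sum]
    have h2 : (gchoose (x + ((0:ℕ) : ℝ)*z) 0 - wchoose z x 0)
        * gchoose (y + ((m+1-0 : ℕ) : ℝ)*z) (m+1-0) = 0 := by
      rw [gchoose_zero, wchoose_zero]; ring
    rw [h2, add_zero]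
    apply Finset.sum_congr rfl
    intro k _
    have hs : gchoose (x + ((k+1 : ℕ) : ℝ)*z) (k+1) - wchoose z x (k+1)
        = z * gchoose (x + ((k+1 : ℕ) : ℝ)*z - 1) k := by
      have h := wchoose_split z x k
      push_cast at h ⊢
      linarith
    rw [Nat.succ_sub_succ, hs]
    have ha : x + ((k+1 : ℕ) : ℝ)*z - 1 = x + z - 1 + (k : ℝ)*z := by push_cast; ring
    rw [ha]
    ring
  have hr := rothe z (m+1) x y
  linarith

lemma ssum_closed (z : ℝ) : ∀ (m : ℕ) (x y : ℝ),
    ssum z m x y = ∑ i ∈ Finset.range (m+1), z^i * gchoose (x + y + (m : ℝ)*z - i) (m-i) := by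
  intro m
  induction m with
  | zero =>
    intro x y
    simp [ssum, gchoose_zero]
  | succ m ih =>
    intro x y
    rw [ssum_rec, ih, Finset.sum_range_succ' _ (m+1)]
    have h0 : z^0 * gchoose (x + y + ((m+1 : ℕ) : ℝ)*z - ((0:ℕ) : ℝ)) (m+1-0)
        = gchoose (x + y + ((m+1 : ℕ) : ℝ)*z) (m+1) := by
      rw [pow_zero, one_mul]
      congr 1
      push_cast; ring
    rw [h0, Finset.mul_sum]
    rw [add_comm]
    congr 1
    apply Finset.sum_congr rfl
    intro i _
    rw [Nat.succ_sub_succ]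
    have ha : x + z - 1 + y + (m : ℝ)*z - i = x + y + ((m+1 : ℕ) : ℝ)*z - ((i+1 : ℕ) : ℝ) := by
      push_cast; ring
    rw [ha]
    ring

lemma gchoose_vandermonde (a b : ℝ) (m : ℕ) :
    ∑ k ∈ Finset.range (m+1), gchoose a k * gchoose b (m-k) = gchoose (a+b) m := by
  have h := ssum_closed 0 m a b
  simp only [ssum, mul_zero, add_zero] at h
  rw [h, Finset.sum_eq_single 0]
  · simp [pow_zero]
  · intro i _ hi
    rw [zero_pow hi, zero_mul]
  · simp

lemma tsum_step (z w : ℝ) (m : ℕ) :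
    ∑ i ∈ Finset.range (m+2), z^i * gchoose (w - i) (m+1-i)
      = (z-1) * (∑ i ∈ Finset.range (m+1), z^i * gchoose (w - i) (m-i))
        + gchoose (w+1) (m+1) := by
  -- LHS = z*T(m) - (T(m) - gchoose w m) + gchoose w (m+1)
  rw [Finset.sum_range_succ' _ (m+1)]
  -- = ∑_{i<m+1} z^(i+1) gchoose (w-(i+1)) (m-i) + gchoose w (m+1)
  have e0 : z^0 * gchoose (w - ((0:ℕ):ℝ)) (m+1-0) = gchoose w (m+1) := by
    rw [pow_zero, one_mul]; congr 1; push_cast; ring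
  rw [e0]
  set T := ∑ i ∈ Finset.range (m+1), z^i * gchoose (w - i) (m-i) with hT
  set D : ℕ → ℝ := fun i => if i < m then gchoose (w - (i:ℝ) - 1) (m-i-1) else 0 with hD
  have hterm : ∀ i ∈ Finset.range (m+1),
      z^(i+1) * gchoose (w - ((i+1:ℕ):ℝ)) (m+1-(i+1))
        = z * (z^i * gchoose (w - (i:ℝ)) (m-i)) - z^(i+1) * D i := by
    intro i hi
    have him : i ≤ m := by have := Finset.mem_range.mp hi; omega
    rw [Nat.succ_sub_succ]
    by_cases hlt : i < m
    · have h1 : m - i = (m-i-1)+1 := by omega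
      have h2 : (w - ((i+1:ℕ):ℝ)) = w - (i:ℝ) - 1 := by push_cast; ring
      have hpas := gchoose_pascal (w - (i:ℝ) - 1) (m-i-1)
      have h3 : w - (i:ℝ) - 1 + 1 = w - (i:ℝ) := by ring
      rw [h3] at hpas
      rw [h2, h1, hD]
      simp only [hlt, if_pos]
      rw [hpas]
      ring
    · have h1 : i = m := by
        have := Finset.mem_range.mp hi; omega
      have h2 : m - i = 0 := by omega
      have h3 : D i = 0 := by rw [hD]; simp [h1]
      rw [h2, h3, gchoose_zero, gchoose_zero]
      ring
  rw [Finset.sum_congr rfl hterm, Finset.sum_sub_distrib, ← Finset.mul_sum]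
  have hDsum : ∑ i ∈ Finset.range (m+1), z^(i+1) * D i = T - gchoose w m := by
    rw [Finset.sum_range_succ]
    have : D m = 0 := by simp [hD]
    rw [this, mul_zero, add_zero]
    have hT2 : T = (∑ i ∈ Finset.range m, z^(i+1) * gchoose (w - ((i+1:ℕ):ℝ)) (m-(i+1)))
        + z^0 * gchoose (w - ((0:ℕ):ℝ)) (m-0) := by
      rw [hT, Finset.sum_range_succ']
    rw [hT2]
    have e1 : z^0 * gchoose (w - ((0:ℕ):ℝ)) (m-0) = gchoose w m := by
      rw [pow_zero, one_mul]; congr 1; push_cast; ring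
    rw [e1, add_sub_cancel_right]
    apply Finset.sum_congr rfl
    intro i hi
    have hlt : i < m := Finset.mem_range.mp hi
    have h2 : (w - ((i+1:ℕ):ℝ)) = w - (i:ℝ) - 1 := by push_cast; ring
    have h3 : m - (i+1) = m - i - 1 := by omega
    rw [h2, h3, hD]
    simp [hlt]
  rw [hDsum, ← hT]
  have hpas := gchoose_pascal w m
  rw [hpas]
  ring

lemma tident (z w : ℝ) : ∀ m : ℕ,
    ∑ i ∈ Finset.range (m+1), z^i * gchoose (w - i) (m-i)
      = ∑ j ∈ Finset.range (m+1), gchoose (w+1) j * (z-1)^(m-j) := by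
  intro m
  induction m with
  | zero => simp [gchoose_zero]
  | succ m ih =>
    rw [tsum_step, ih]
    rw [Finset.sum_range_succ _ (m+1)]
    have e1 : gchoose (w+1) (m+1) * (z-1)^(m+1-(m+1)) = gchoose (w+1) (m+1) := by
      simp
    rw [e1, Finset.mul_sum]
    congr 1
    apply Finset.sum_congr rfl
    intro j hj
    have : m+1-j = (m-j)+1 := by
      have := Finset.mem_range.mp hj; omega
    rw [this, pow_succ]
    ring

lemma gchoose_zero_left (k : ℕ) : gchoose 0 (k+1) = 0 := by
  unfold gchoose
  rw [Finset.prod_eq_zero (Finset.mem_range.mpr (Nat.succ_pos k))]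
  · simp
  · simp

lemma coeff_binomSeries (x : ℝ) (k : ℕ) : coeff k (binomSeries x) = gchoose x k :=
  coeff_mk k _

lemma constantCoeff_binomSeries (x : ℝ) : constantCoeff (binomSeries x) = 1 := by
  rw [binomSeries, constantCoeff_mk, gchoose_zero]

lemma binomSeries_zero : binomSeries 0 = 1 := by
  ext k
  rw [coeff_binomSeries, coeff_one]
  cases k with
  | zero => simp [gchoose_zero]
  | succ j => simp [gchoose_zero_left]

lemma binomSeries_mul (a b : ℝ) : binomSeries a * binomSeries b = binomSeries (a+b) := by
  ext n
  rw [coeff_mul, coeff_binomSeries, Finset.Nat.sum_antidiagonal_eq_sum_range_succ_mk]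
  simp only [coeff_binomSeries]
  exact gchoose_vandermonde a b n

lemma binomSeries_inv (b : ℝ) : (binomSeries b)⁻¹ = binomSeries (-b) := by
  rw [PowerSeries.inv_eq_iff_mul_eq_one]
  · rw [binomSeries_mul]
    rw [neg_add_cancel, binomSeries_zero]
  · rw [constantCoeff_binomSeries]; norm_num

lemma binomSeries_inv_pow (b : ℝ) (n : ℕ) :
    ((binomSeries b)⁻¹)^n = binomSeries (-((n:ℝ)*b)) := by
  induction n with
  | zero =>
    rw [pow_zero]
    have : -(((0:ℕ):ℝ)*b) = 0 := by push_cast; ring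
    rw [this, binomSeries_zero]
  | succ n ih =>
    have h : -((((n+1):ℕ):ℝ)*b) = -((n:ℝ)*b) + -b := by push_cast; ring
    rw [h, pow_succ, ih, binomSeries_inv, binomSeries_mul]

lemma geom_inv (c : ℝ) :
    (1 + PowerSeries.C c * PowerSeries.X)⁻¹ = PowerSeries.mk (fun k => (-c)^k) := by
  rw [PowerSeries.inv_eq_iff_mul_eq_one]
  · ext n
    rw [mul_add, mul_one, coeff_one]
    cases n with
    | zero =>
      simp only [map_add, if_pos rfl]
      rw [coeff_mk]
      have : (PowerSeries.mk (fun k => (-c)^k) * (PowerSeries.C c * PowerSeries.X))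
          = (PowerSeries.C c * (PowerSeries.mk (fun k => (-c)^k) * PowerSeries.X)) := by ring
      rw [this, coeff_C_mul, coeff_zero_mul_X]
      simp
    | succ j =>
      simp only [map_add, if_neg (Nat.succ_ne_zero j)]
      rw [coeff_mk]
      have : (PowerSeries.mk (fun k => (-c)^k) * (PowerSeries.C c * PowerSeries.X))
          = (PowerSeries.C c * (PowerSeries.mk (fun k => (-c)^k) * PowerSeries.X)) := by ring
      rw [this, coeff_C_mul, coeff_succ_mul_X, coeff_mk]
      ring
  · simp

lemma gould_main (α β : ℝ) (m : ℕ) :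
    ∑ n ∈ Finset.range (m+1), gchoose (α + (n:ℝ)*β) n * gchoose (-((n:ℝ)*β)) (m-n)
      = ∑ j ∈ Finset.range (m+1), gchoose (α+1) j * (β-1)^(m-j) := by
  have h1 : ∑ n ∈ Finset.range (m+1), gchoose (α + (n:ℝ)*β) n * gchoose (-((n:ℝ)*β)) (m-n)
      = ssum β m α (-((m:ℝ)*β)) := by
    unfold ssum
    apply Finset.sum_congr rfl
    intro k hk
    have hkm : k ≤ m := by have := Finset.mem_range.mp hk; omega
    congr 2
    rw [Nat.cast_sub hkm]
    ring
  rw [h1, ssum_closed]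
  have h2 : ∀ i ∈ Finset.range (m+1),
      β^i * gchoose (α + -((m:ℝ)*β) + (m:ℝ)*β - i) (m-i) = β^i * gchoose (α - i) (m-i) := by
    intro i _
    congr 2
    ring
  rw [Finset.sum_congr rfl h2, tident]


/-- Gould's identity (a form of Lambert's identity): with `x = 1 + t` and
`u = (x-1)/x^β = t·(1+t)^{-β}`, one has `Σ_{n≥0} C(α+nβ, n) uⁿ = x^{α+1}/((1-β)x+β)`.
The infinite sum is expressed coefficientwise: since `u` has zero constant term,
`uⁿ` contributes nothing to the coefficient of `t^m` for `n > m`. -/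
theorem gould_lambert_identity (α β : ℝ) (m : ℕ) :
    ∑ n ∈ Finset.range (m + 1),
        gchoose (α + n * β) n *
          PowerSeries.coeff m ((PowerSeries.X * (binomSeries β)⁻¹) ^ n) =
      PowerSeries.coeff m
        (binomSeries (α + 1) * (1 + PowerSeries.C (1 - β) * PowerSeries.X)⁻¹) := by
  have hL : ∀ n ∈ Finset.range (m+1),
      gchoose (α + n * β) n * PowerSeries.coeff m ((PowerSeries.X * (binomSeries β)⁻¹) ^ n)
        = gchoose (α + (n:ℝ)*β) n * gchoose (-((n:ℝ)*β)) (m-n) := by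
    intro n hn
    have hnm : n ≤ m := by have := Finset.mem_range.mp hn; omega
    rw [mul_pow, binomSeries_inv_pow, PowerSeries.coeff_X_pow_mul']
    rw [if_pos hnm, coeff_binomSeries]
  rw [Finset.sum_congr rfl hL, gould_main]
  rw [geom_inv, coeff_mul, Finset.Nat.sum_antidiagonal_eq_sum_range_succ_mk]
  apply Finset.sum_congr rfl
  intro j _
  rw [coeff_binomSeries, coeff_mk]
  norm_num
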